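/- Let γ be a path in [n]×[k] and φ a path in [n+k]×[k], and set θ = E_γ ∘ φ : [n+2k] → [n]×[k]. Then there are exactly k indices i ∈ {0, …, n+2k−1} with θ(i) = θ(i+1). Consequently θ admits a factorization θ = γ' ∘ ν, where ν : [n+2k] → [n+k] is a surjective monotone map and γ' is a path in [n]×[k]. -/

import Mathlib

/-- `γ` is a path in `[n] × [k]` (a simplex of maximal dimension of `Δⁿ × Δᵏ`):
it starts at `(0,0)`, ends at `(n,k)`, and each step increases exactly one
coordinate by exactly `1`.  The parameter `m` records the length of the path;
necessarily `m = n + k`. -/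
def IsPath (n k m : ℕ) (γ : Fin (m + 1) → Fin (n + 1) × Fin (k + 1)) : Prop :=
  γ 0 = (0, 0) ∧
  γ (Fin.last m) = (Fin.last n, Fin.last k) ∧
  ∀ i : Fin m,
    (((γ i.succ).1 : ℕ) = ((γ i.castSucc).1 : ℕ) + 1 ∧ (γ i.succ).2 = (γ i.castSucc).2) ∨
    ((γ i.succ).1 = (γ i.castSucc).1 ∧ ((γ i.succ).2 : ℕ) = ((γ i.castSucc).2 : ℕ) + 1)

/-- The extension `E_γ : [n+k] × [k] → [n] × [k]` of a path `γ`, given by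
`E_γ(i, j) = (a_i, max (b_i) j)` where `γ i = (a_i, b_i)`. -/
def pathExt (n k m : ℕ) (γ : Fin (m + 1) → Fin (n + 1) × Fin (k + 1)) :
    Fin (m + 1) × Fin (k + 1) → Fin (n + 1) × Fin (k + 1) :=
  fun p => ((γ p.1).1, max (γ p.1).2 p.2)

/-- The strict order on paths: `γ₁ < γ₂` if at the least index `s` where they differ the
first coordinate of `γ₁ s` is smaller than that of `γ₂ s`. -/
def pathLT (n k m : ℕ) (γ₁ γ₂ : Fin (m + 1) → Fin (n + 1) × Fin (k + 1)) : Prop :=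
  ∃ s : Fin (m + 1), γ₁ s ≠ γ₂ s ∧ (∀ t : Fin (m + 1), t < s → γ₁ t = γ₂ t) ∧
    (γ₁ s).1 < (γ₂ s).1


namespace PathDegAux

lemma fin_val_max {m : ℕ} (a b : Fin m) : ((max a b : Fin m) : ℕ) = max (a : ℕ) (b : ℕ) := by
  rcases le_total a b with h | h
  · rw [max_eq_right h, max_eq_right (Fin.le_def.mp h)]
  · rw [max_eq_left h, max_eq_left (Fin.le_def.mp h)]

variable {M N : ℕ} {g : Fin (M + 1) → ℕ}

lemma mono (hstep : ∀ i : Fin M, g i.succ = g i.castSucc ∨ g i.succ = g i.castSucc + 1) :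
    Monotone g := by
  apply Fin.monotone_iff_le_succ.mpr
  intro i
  rcases hstep i with h | h <;> omega

lemma cross (h0 : g 0 = 0)
    (hstep : ∀ i : Fin M, g i.succ = g i.castSucc ∨ g i.succ = g i.castSucc + 1)
    (c : ℕ) (hc : ∃ i, c + 1 ≤ g i) :
    ∃ t : Fin M, g t.castSucc = c ∧ g t.succ = c + 1 := by
  classical
  obtain ⟨i₀, hi₀⟩ := hc
  set S : Finset (Fin (M + 1)) := Finset.univ.filter fun i => c + 1 ≤ g i with hSdef
  have hS : S.Nonempty := ⟨i₀, by simp [hSdef, hi₀]; omega⟩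
  have hjS : S.min' hS ∈ S := S.min'_mem hS
  have hjv : c + 1 ≤ g (S.min' hS) := by
    simpa [hSdef] using hjS
  have hjmin : ∀ t, c + 1 ≤ g t → S.min' hS ≤ t := fun t ht =>
    S.min'_le t (by simp [hSdef, ht]; omega)
  rcases Fin.eq_zero_or_eq_succ (S.min' hS) with h | ⟨t, ht⟩
  · rw [h, h0] at hjv; omega
  · refine ⟨t, ?_, ?_⟩
    · have h1 : ¬ (c + 1 ≤ g t.castSucc) := by
        intro h
        exact absurd (ht ▸ hjmin _ h) (not_le.mpr (Fin.castSucc_lt_succ : t.castSucc < t.succ))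
      have h2 := hstep t
      rw [ht] at hjv
      omega
    · have h1 : ¬ (c + 1 ≤ g t.castSucc) := by
        intro h
        exact absurd (ht ▸ hjmin _ h) (not_le.mpr (Fin.castSucc_lt_succ : t.castSucc < t.succ))
      have h2 := hstep t
      rw [ht] at hjv
      omega

lemma surj (h0 : g 0 = 0) (hlast : g (Fin.last M) = N)
    (hstep : ∀ i : Fin M, g i.succ = g i.castSucc ∨ g i.succ = g i.castSucc + 1) :
    ∀ c ≤ N, ∃ i, g i = c := by
  intro c hc
  cases c with
  | zero => exact ⟨0, h0⟩
  | succ c =>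
    obtain ⟨t, _, h2⟩ := cross h0 hstep c ⟨Fin.last M, by omega⟩
    exact ⟨t.succ, h2⟩

lemma const {α : Type*} (θ : Fin (M + 1) → α) (g : Fin (M + 1) → ℕ)
    (hd : ∀ i : Fin M, (θ i.succ = θ i.castSucc ∧ g i.succ = g i.castSucc) ∨
      g i.succ = g i.castSucc + 1) :
    ∀ i i' : Fin (M + 1), g i = g i' → θ i = θ i' := by
  have hstep : ∀ i : Fin M, g i.succ = g i.castSucc ∨ g i.succ = g i.castSucc + 1 :=
    fun i => (hd i).imp And.right id
  have hmono := mono hstep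
  suffices H : ∀ i' i : Fin (M + 1), i ≤ i' → g i = g i' → θ i = θ i' by
    intro i i' h
    rcases le_total i i' with hle | hle
    · exact H i' i hle h
    · exact (H i i' hle h.symm).symm
  intro i'
  induction i' using Fin.induction with
  | zero =>
    intro i hi _
    rw [Fin.le_zero_iff.mp hi]
  | succ j ih =>
    intro i hi hg
    rcases eq_or_lt_of_le hi with h | h
    · rw [h]
    · have hile : i ≤ j.castSucc := Fin.le_castSucc_iff.mpr h
      rcases hd j with ⟨hθ, hgj⟩ | hgj
      · rw [hθ]
        exact ih i hile (by omega)
      · have := hmono hile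
        omega

lemma count (h0 : g 0 = 0) (hlast : g (Fin.last M) = N)
    (hstep : ∀ i : Fin M, g i.succ = g i.castSucc ∨ g i.succ = g i.castSucc + 1) :
    (Finset.univ.filter fun i : Fin M => g i.succ = g i.castSucc).card + N = M := by
  classical
  set G : ℕ → ℤ := fun j => if h : j < M + 1 then (g ⟨j, h⟩ : ℤ) else N with hG
  have htel : ∑ j ∈ Finset.range M, (G (j + 1) - G j) = G M - G 0 := Finset.sum_range_sub G M
  have hGM : G M = N := by
    rw [hG]
    simp only [dif_pos (Nat.lt_succ_self M)]
    norm_cast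
  have hG0 : G 0 = 0 := by
    rw [hG]
    simp only [dif_pos (Nat.succ_pos M)]
    norm_cast
  have heach : ∀ i : Fin M, G (i.val + 1) - G i.val =
      if g i.succ = g i.castSucc then 0 else 1 := by
    intro i
    have h1 : (i.val : ℕ) < M + 1 := by omega
    have h2 : (i.val + 1 : ℕ) < M + 1 := by omega
    have e1 : G i.val = (g i.castSucc : ℤ) := by
      rw [hG]; simp only [dif_pos h1]; rfl
    have e2 : G (i.val + 1) = (g i.succ : ℤ) := by
      rw [hG]; simp only [dif_pos h2]; rfl
    rw [e1, e2]
    rcases hstep i with h | h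
    · rw [if_pos h, h]; ring
    · rw [if_neg (by omega)]; omega
  have hsum : ∑ i : Fin M, (if g i.succ = g i.castSucc then (0 : ℤ) else 1) = N := by
    calc ∑ i : Fin M, (if g i.succ = g i.castSucc then (0 : ℤ) else 1)
        = ∑ i : Fin M, (G (i.val + 1) - G i.val) :=
          Finset.sum_congr rfl fun i _ => (heach i).symm
      _ = ∑ j ∈ Finset.range M, (G (j + 1) - G j) :=
          Fin.sum_univ_eq_sum_range (fun j => G (j + 1) - G j) M
      _ = N := by rw [htel, hGM, hG0]; ring
  have hsum2 : ∑ i : Fin M, (if ¬ (g i.succ = g i.castSucc) then (1 : ℤ) else 0) = N := by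
    rw [← hsum]
    refine Finset.sum_congr rfl fun i _ => ?_
    by_cases h : g i.succ = g i.castSucc <;> simp [h]
  rw [Finset.sum_boole] at hsum2
  have hcard : ((Finset.univ.filter fun i : Fin M => ¬ (g i.succ = g i.castSucc)).card : ℤ)
      = N := hsum2
  have hsplit := Finset.card_filter_add_card_filter_not
    (s := (Finset.univ : Finset (Fin M))) (p := fun i => g i.succ = g i.castSucc)
  simp only [Finset.card_univ, Fintype.card_fin] at hsplit
  omega

end PathDegAux

/-- Let `γ` be a path in `[n] × [k]` and `φ` a path in `[n+k] × [k]`, and set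
`θ = E_γ ∘ φ : [n+2k] → [n] × [k]`.  Then there are exactly `k` indices `i` with
`θ i = θ (i+1)`; consequently `θ` factors as a path `γ'` in `[n] × [k]` precomposed with a
surjective monotone map `ν : [n+2k] → [n+k]`. -/
theorem pathExt_comp_path_degenerates (n k : ℕ)
    (γ : Fin (n + k + 1) → Fin (n + 1) × Fin (k + 1)) (hγ : IsPath n k (n + k) γ)
    (φ : Fin (n + k + k + 1) → Fin (n + k + 1) × Fin (k + 1))
    (hφ : IsPath (n + k) k (n + k + k) φ) :
    (Finset.univ.filter (fun i : Fin (n + k + k) =>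
      pathExt n k (n + k) γ (φ i.castSucc) = pathExt n k (n + k) γ (φ i.succ))).card = k ∧
    ∃ (ν : Fin (n + k + k + 1) → Fin (n + k + 1))
      (γ' : Fin (n + k + 1) → Fin (n + 1) × Fin (k + 1)),
      Monotone ν ∧ Function.Surjective ν ∧ IsPath n k (n + k) γ' ∧
      ∀ i : Fin (n + k + k + 1), pathExt n k (n + k) γ (φ i) = γ' (ν i) := by
  classical
  set θ : Fin (n + k + k + 1) → Fin (n + 1) × Fin (k + 1) :=
    fun i => pathExt n k (n + k) γ (φ i) with hθdef
  set g : Fin (n + k + k + 1) → ℕ := fun i => ((θ i).1 : ℕ) + ((θ i).2 : ℕ) with hgdef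
  have hθ1 : ∀ i, (θ i).1 = (γ (φ i).1).1 := fun _ => rfl
  have hθ2 : ∀ i, ((θ i).2 : ℕ) = max ((γ (φ i).1).2 : ℕ) ((φ i).2 : ℕ) :=
    fun i => PathDegAux.fin_val_max _ _
  -- the step dichotomy
  have hdich : ∀ i : Fin (n + k + k), (θ i.succ = θ i.castSucc ∧ g i.succ = g i.castSucc) ∨
      (g i.succ = g i.castSucc + 1 ∧
        ((((θ i.succ).1 : ℕ) = ((θ i.castSucc).1 : ℕ) + 1 ∧ (θ i.succ).2 = (θ i.castSucc).2) ∨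
         ((θ i.succ).1 = (θ i.castSucc).1 ∧
           ((θ i.succ).2 : ℕ) = ((θ i.castSucc).2 : ℕ) + 1))) := by
    intro i
    rcases hφ.2.2 i with ⟨ha, hb⟩ | ⟨ha, hb⟩
    · -- first coordinate of φ increases
      have hlt : ((φ i.castSucc).1 : ℕ) < n + k := by
        have := (φ i.succ).1.isLt; omega
      set q : Fin (n + k) := ⟨(φ i.castSucc).1, hlt⟩ with hq
      have hc : (φ i.castSucc).1 = q.castSucc := by
        apply Fin.ext; rfl
      have hs : (φ i.succ).1 = q.succ := by
        apply Fin.ext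
        simp only [Fin.val_succ, hq, ha]
      have e1s : ((θ i.succ).1 : ℕ) = ((γ q.succ).1 : ℕ) := by rw [hθ1, hs]
      have e1c : ((θ i.castSucc).1 : ℕ) = ((γ q.castSucc).1 : ℕ) := by rw [hθ1, hc]
      have e2s : ((θ i.succ).2 : ℕ) =
          max ((γ q.succ).2 : ℕ) ((φ i.castSucc).2 : ℕ) := by
        rw [hθ2, hs, hb]
      have e2c : ((θ i.castSucc).2 : ℕ) =
          max ((γ q.castSucc).2 : ℕ) ((φ i.castSucc).2 : ℕ) := by
        rw [hθ2, hc]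
      rcases hγ.2.2 q with ⟨h1, h2⟩ | ⟨h1, h2⟩
      · right
        have h2' : ((γ q.succ).2 : ℕ) = ((γ q.castSucc).2 : ℕ) := by rw [h2]
        have heq2 : ((θ i.succ).2 : ℕ) = ((θ i.castSucc).2 : ℕ) := by
          rw [e2s, e2c, h2']
        refine ⟨?_, Or.inl ⟨by omega, Fin.ext heq2⟩⟩
        rw [hgdef]
        simp only
        omega
      · have h1' : ((γ q.succ).1 : ℕ) = ((γ q.castSucc).1 : ℕ) := by rw [h1]
        by_cases hbc : ((φ i.castSucc).2 : ℕ) ≤ ((γ q.castSucc).2 : ℕ)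
        · right
          have heq2 : ((θ i.succ).2 : ℕ) = ((θ i.castSucc).2 : ℕ) + 1 := by
            rw [e2s, e2c]; omega
          refine ⟨?_, Or.inr ⟨Fin.ext (by omega), heq2⟩⟩
          rw [hgdef]; simp only; omega
        · left
          have heq2 : ((θ i.succ).2 : ℕ) = ((θ i.castSucc).2 : ℕ) := by
            rw [e2s, e2c]; omega
          have heq1 : ((θ i.succ).1 : ℕ) = ((θ i.castSucc).1 : ℕ) := by omega
          refine ⟨Prod.ext (Fin.ext heq1) (Fin.ext heq2), ?_⟩
          rw [hgdef]; simp only; omega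
    · -- second coordinate of φ increases
      have e1 : ((θ i.succ).1 : ℕ) = ((θ i.castSucc).1 : ℕ) := by
        rw [hθ1, hθ1, ha]
      have e2s : ((θ i.succ).2 : ℕ) =
          max ((γ (φ i.castSucc).1).2 : ℕ) ((φ i.castSucc).2 + 1 : ℕ) := by
        rw [hθ2, ha, hb]
      have e2c : ((θ i.castSucc).2 : ℕ) =
          max ((γ (φ i.castSucc).1).2 : ℕ) ((φ i.castSucc).2 : ℕ) := hθ2 _
      by_cases h : ((φ i.castSucc).2 : ℕ) + 1 ≤ ((γ (φ i.castSucc).1).2 : ℕ)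
      · left
        have heq2 : ((θ i.succ).2 : ℕ) = ((θ i.castSucc).2 : ℕ) := by
          rw [e2s, e2c]; omega
        refine ⟨Prod.ext (Fin.ext e1) (Fin.ext heq2), ?_⟩
        rw [hgdef]; simp only; omega
      · right
        have heq2 : ((θ i.succ).2 : ℕ) = ((θ i.castSucc).2 : ℕ) + 1 := by
          rw [e2s, e2c]; omega
        refine ⟨?_, Or.inr ⟨Fin.ext e1, heq2⟩⟩
        rw [hgdef]; simp only; omega
  have hstep : ∀ i : Fin (n + k + k), g i.succ = g i.castSucc ∨ g i.succ = g i.castSucc + 1 :=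
    fun i => (hdich i).imp And.right And.left
  -- boundary values
  have hθ0 : θ 0 = (0, 0) := by
    rw [hθdef]
    simp only [pathExt, hφ.1, hγ.1]
    simp
  have hθlast : θ (Fin.last (n + k + k)) = (Fin.last n, Fin.last k) := by
    rw [hθdef]
    simp only [pathExt, hφ.2.1, hγ.2.1]
    simp
  have hg0 : g 0 = 0 := by rw [hgdef]; simp [hθ0]
  have hglast : g (Fin.last (n + k + k)) = n + k := by
    rw [hgdef]; simp [hθlast]
  -- counting
  have hcount := PathDegAux.count (N := n + k) hg0 hglast hstep
  have hfeq : (Finset.univ.filter (fun i : Fin (n + k + k) =>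
        pathExt n k (n + k) γ (φ i.castSucc) = pathExt n k (n + k) γ (φ i.succ))) =
      (Finset.univ.filter fun i : Fin (n + k + k) => g i.succ = g i.castSucc) := by
    apply Finset.filter_congr
    intro i _
    constructor
    · intro h
      have : θ i.succ = θ i.castSucc := h.symm
      rw [hgdef]; simp only; rw [this]
    · intro h
      rcases hdich i with ⟨h1, _⟩ | ⟨h1, _⟩
      · exact h1.symm
      · omega
  constructor
  · rw [hfeq]; omega
  -- construction of ν and γ'
  · have hmono := PathDegAux.mono hstep
    have hgle : ∀ i, g i ≤ n + k := by
      intro i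
      have := hmono (Fin.le_last i)
      omega
    set ν : Fin (n + k + k + 1) → Fin (n + k + 1) := fun i => ⟨g i, by have := hgle i; omega⟩
      with hν
    have hνmono : Monotone ν := by
      intro a b h
      simp only [hν, Fin.mk_le_mk]
      exact hmono h
    have hνsurj : Function.Surjective ν := by
      intro j
      obtain ⟨i, hi⟩ := PathDegAux.surj hg0 hglast hstep j.val (by have := j.isLt; omega)
      exact ⟨i, Fin.ext hi⟩
    set σ := Function.surjInv hνsurj with hσdef
    have hσ : ∀ j, ν (σ j) = j := fun j => Function.surjInv_eq hνsurj j
    have hgσ : ∀ j, g (σ j) = j.val := fun j => congrArg Fin.val (hσ j)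
    have hconst : ∀ i i' : Fin (n + k + k + 1), g i = g i' → θ i = θ i' :=
      PathDegAux.const θ g (fun i => (hdich i).imp id And.left)
    refine ⟨ν, fun j => θ (σ j), hνmono, hνsurj, ⟨?_, ?_, ?_⟩, ?_⟩
    · -- γ' 0 = (0,0)
      show θ (σ 0) = (0, 0)
      rw [hconst (σ 0) 0 (by rw [hgσ, hg0]; rfl), hθ0]
    · -- γ' last
      show θ (σ (Fin.last (n + k))) = (Fin.last n, Fin.last k)
      rw [hconst (σ (Fin.last (n + k))) (Fin.last (n + k + k))
        (by rw [hgσ, hglast]; rfl), hθlast]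
    · -- step condition
      intro j
      have hc : (j.val : ℕ) + 1 ≤ n + k := j.isLt
      obtain ⟨t, ht1, ht2⟩ := PathDegAux.cross hg0 hstep j.val
        ⟨Fin.last (n + k + k), by omega⟩
      have e1 : θ (σ j.castSucc) = θ t.castSucc :=
        hconst _ _ (by rw [hgσ, ht1]; rfl)
      have e2 : θ (σ j.succ) = θ t.succ :=
        hconst _ _ (by rw [hgσ, ht2]; rfl)
      simp only [e1, e2]
      rcases hdich t with ⟨_, h⟩ | ⟨_, h⟩
      · omega
      · exact h
    · intro i
      show θ i = θ (σ (ν i))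
      exact (hconst (σ (ν i)) i (by rw [hgσ])).symm
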